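/- Stirling bounds: for every positive integer m, √(2π)·m^{m+1/2}·e^{1/(12m+1) − m} ≤ m! ≤ √(2π)·m^{m+1/2}·e^{1/(12m) − m}. -/

import Mathlib

open Real Filter Topology



lemma log_lower {t : ℝ} (h0 : 0 ≤ t) (h1 : t < 1) :
    2*t + 2*t^3/3 ≤ Real.log (1+t) - Real.log (1-t) := by
  set F : ℝ → ℝ := fun x => Real.log (1+x) - Real.log (1-x) - (2*x + 2*x^3/3) with hF
  have key : MonotoneOn F (Set.Icc 0 t) := by
    apply monotoneOn_of_hasDerivWithinAt_nonneg (convex_Icc 0 t)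
      (f' := fun x => 2*x^4/(1-x^2))
    · apply ContinuousOn.sub
      apply ContinuousOn.sub
      · exact (Real.continuousOn_log.comp (by fun_prop)
          (fun x hx => by simp at hx ⊢; nlinarith [hx.1]))
      · exact (Real.continuousOn_log.comp (by fun_prop)
          (fun x hx => by simp at hx ⊢; nlinarith [hx.2]))
      · fun_prop
    · intro x hx
      rw [interior_Icc] at hx
      obtain ⟨hx0, hxt⟩ := hx
      have hx1 : x < 1 := hxt.trans h1
      have h1p : (0:ℝ) < 1 + x := by linarith
      have h1m : (0:ℝ) < 1 - x := by linarith
      have d1 : HasDerivAt (fun x : ℝ => Real.log (1+x)) (1/(1+x)) x := by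
        simpa [Function.comp_def] using ((Real.hasDerivAt_log h1p.ne').comp x ((hasDerivAt_id x).const_add 1))
      have d2 : HasDerivAt (fun x : ℝ => Real.log (1-x)) (-(1/(1-x))) x := by
        simpa [Function.comp_def] using ((Real.hasDerivAt_log h1m.ne').comp x ((hasDerivAt_id x).const_sub 1))
      have d3 : HasDerivAt F (1/(1+x) - (-(1/(1-x))) - (2*1 + 2*((3:ℕ)*x^(3-1))/3)) x :=
        (d1.sub d2).sub (((hasDerivAt_id x).const_mul 2).add
          (((hasDerivAt_pow 3 x).const_mul 2).div_const 3))
      have : (1/(1+x) - (-(1/(1-x))) - (2*1 + 2*((3:ℕ)*x^(3-1))/3)) = 2*x^4/(1-x^2) := by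
        have hne : (1-x^2) ≠ 0 := by nlinarith
        field_simp
        ring
      rw [this] at d3
      exact d3.hasDerivWithinAt
    · intro x hx
      rw [interior_Icc] at hx
      have hx1 : x < 1 := hx.2.trans h1
      have : (0:ℝ) < 1 - x^2 := by nlinarith [hx.1]
      positivity
  have h0t : (0:ℝ) ∈ Set.Icc 0 t := by constructor <;> linarith
  have htt : t ∈ Set.Icc (0:ℝ) t := by constructor <;> linarith
  have := key h0t htt h0
  simp only [hF] at this
  norm_num at this
  linarith


lemma log_upper {t : ℝ} (h0 : 0 ≤ t) (h1 : t < 1) :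
    Real.log (1+t) - Real.log (1-t) ≤ 2*t + 2*t^3/(3*(1-t^2)) := by
  set F : ℝ → ℝ := fun x => 2*x + 2*x^3/(3*(1-x^2)) - (Real.log (1+x) - Real.log (1-x)) with hF
  have key : MonotoneOn F (Set.Icc 0 t) := by
    apply monotoneOn_of_hasDerivWithinAt_nonneg (convex_Icc 0 t)
      (f' := fun x => 4*x^4/(3*(1-x^2)^2))
    · apply ContinuousOn.sub
      · apply ContinuousOn.add (by fun_prop)
        apply ContinuousOn.div (by fun_prop) (by fun_prop)
        intro x hx
        simp only [Set.mem_Icc] at hx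
        have : x < 1 := lt_of_le_of_lt hx.2 h1
        nlinarith [hx.1]
      · apply ContinuousOn.sub
        · exact (Real.continuousOn_log.comp (by fun_prop)
            (fun x hx => by simp at hx ⊢; nlinarith [hx.1]))
        · exact (Real.continuousOn_log.comp (by fun_prop)
            (fun x hx => by simp at hx ⊢; nlinarith [hx.2]))
    · intro x hx
      rw [interior_Icc] at hx
      obtain ⟨hx0, hxt⟩ := hx
      have hx1 : x < 1 := hxt.trans h1
      have h1p : (0:ℝ) < 1 + x := by linarith
      have h1m : (0:ℝ) < 1 - x := by linarith
      have hden : (0:ℝ) < 1 - x^2 := by nlinarith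
      have d1 : HasDerivAt (fun x : ℝ => Real.log (1+x)) (1/(1+x)) x := by
        simpa [Function.comp_def] using ((Real.hasDerivAt_log h1p.ne').comp x ((hasDerivAt_id x).const_add 1))
      have d2 : HasDerivAt (fun x : ℝ => Real.log (1-x)) (-(1/(1-x))) x := by
        simpa [Function.comp_def] using ((Real.hasDerivAt_log h1m.ne').comp x ((hasDerivAt_id x).const_sub 1))
      have dnum : HasDerivAt (fun x : ℝ => 2*x^3) (2*((3:ℕ)*x^(3-1))) x :=
        (hasDerivAt_pow 3 x).const_mul 2
      have dden : HasDerivAt (fun x : ℝ => 3*(1-x^2)) (3*(0-(2:ℕ)*x^(2-1))) x :=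
        ((hasDerivAt_const x 1).sub (hasDerivAt_pow 2 x)).const_mul 3
      have hdenne : 3*(1-x^2) ≠ 0 := by positivity
      have dq := dnum.div dden hdenne
      have d3 := (((hasDerivAt_id x).const_mul 2).add dq).sub (d1.sub d2)
      have d3' : HasDerivAt F (4*x^4/(3*(1-x^2)^2)) x := by
        convert d3 using 1
        · rfl
        · rfl
        · rfl
        have : (1-x^2) ≠ 0 := hden.ne'
        push_cast
        field_simp
        ring
      exact d3'.hasDerivWithinAt
    · intro x hx
      rw [interior_Icc] at hx
      have hx1 : x < 1 := hx.2.trans h1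
      have : (0:ℝ) < 1 - x^2 := by nlinarith [hx.1]
      positivity
  have h0t : (0:ℝ) ∈ Set.Icc 0 t := by constructor <;> linarith
  have htt : t ∈ Set.Icc (0:ℝ) t := by constructor <;> linarith
  have := key h0t htt h0
  simp only [hF] at this
  norm_num at this
  linarith

noncomputable def dSeq (m : ℕ) : ℝ :=
  Real.log (Nat.factorial m) - ((m:ℝ) + 1/2) * Real.log m + m

lemma dSeq_step (m : ℕ) (hm : 0 < m) :
    dSeq m - dSeq (m+1) = ((m:ℝ) + 1/2) * (Real.log ((m:ℝ)+1) - Real.log m) - 1 := by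
  have h1 : (Nat.factorial (m+1) : ℝ) = ((m:ℝ)+1) * (Nat.factorial m : ℝ) := by
    push_cast [Nat.factorial_succ]; ring
  have h2 : Real.log (Nat.factorial (m+1)) =
      Real.log ((m:ℝ)+1) + Real.log (Nat.factorial m) := by
    rw [h1, Real.log_mul (by positivity) (by positivity)]
  simp only [dSeq, h2]
  push_cast
  ring

lemma key_ineq {x : ℝ} (hx : 1 ≤ x) :
    1 + (1/(12*x+1) - 1/(12*(x+1)+1)) ≤ (x + 1/2) * (Real.log (x+1) - Real.log x) ∧
    (x + 1/2) * (Real.log (x+1) - Real.log x) ≤ 1 + (1/(12*x) - 1/(12*(x+1))) := by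
  have hx0 : (0:ℝ) < x := by linarith
  set t : ℝ := 1/(2*x+1) with ht
  have h2x : (0:ℝ) < 2*x+1 := by linarith
  have ht0 : 0 < t := by positivity
  have ht1 : t < 1 := by rw [ht, div_lt_one h2x]; linarith
  have hlog : Real.log (x+1) - Real.log x = Real.log (1+t) - Real.log (1-t) := by
    have e1 : 1 + t = (2*x+2)/(2*x+1) := by rw [ht]; field_simp; ring
    have e2 : 1 - t = (2*x)/(2*x+1) := by rw [ht]; field_simp; ring
    rw [e1, e2, Real.log_div (by positivity) h2x.ne', Real.log_div (by positivity) h2x.ne']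
    have e3 : Real.log (2*x+2) = Real.log 2 + Real.log (x+1) := by
      rw [← Real.log_mul (by norm_num) (by positivity)]; ring_nf
    have e4 : Real.log (2*x) = Real.log 2 + Real.log x := by
      rw [← Real.log_mul (by norm_num) hx0.ne']
    rw [e3, e4]; ring
  have hlo := log_lower ht0.le ht1
  have hup := log_upper ht0.le ht1
  have hxc : (0:ℝ) < x + 1/2 := by linarith
  constructor
  · have h1 : (x + 1/2) * (2*t + 2*t^3/3) ≤ (x + 1/2) * (Real.log (1+t) - Real.log (1-t)) :=
      mul_le_mul_of_nonneg_left hlo hxc.le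
    rw [hlog]
    refine le_trans ?_ h1
    rw [← sub_nonneg, ht]
    have heq : (x + 1/2) * (2*(1/(2*x+1)) + 2*(1/(2*x+1))^3/3) -
        (1 + (1/(12*x+1) - 1/(12*(x+1)+1))) =
        (24*x - 23)/(3*(2*x+1)^2*((12*x+1)*(12*(x+1)+1))) := by
      field_simp
      ring
    rw [heq]
    apply div_nonneg (by linarith)
    positivity
  · have h1 : (x + 1/2) * (Real.log (1+t) - Real.log (1-t)) ≤
        (x + 1/2) * (2*t + 2*t^3/(3*(1-t^2))) := mul_le_mul_of_nonneg_left hup hxc.le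
    rw [hlog]
    refine h1.trans (le_of_eq ?_)
    have ht2 : 1 - t^2 ≠ 0 := by nlinarith
    rw [ht] at ht2 ⊢
    field_simp at ht2 ⊢
    ring_nf
    ring_nf at ht2
    field_simp
    ring



lemma dSeq_tendsto : Tendsto dSeq atTop (𝓝 (Real.log (Real.sqrt (2*π)))) := by
  have hπ : 0 < π := Real.pi_pos
  have hs : (0:ℝ) < Real.sqrt π := Real.sqrt_pos.mpr hπ
  have h1 : Tendsto (fun n => Real.log (Stirling.stirlingSeq n)) atTop
      (𝓝 (Real.log (Real.sqrt π))) :=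
    (Real.continuousAt_log hs.ne').tendsto.comp Stirling.tendsto_stirlingSeq_sqrt_pi
  have h2 : Tendsto (fun n => Real.log (Stirling.stirlingSeq n) + 1/2 * Real.log 2) atTop
      (𝓝 (Real.log (Real.sqrt π) + 1/2 * Real.log 2)) := h1.add_const _
  have heq : ∀ᶠ n in atTop, Real.log (Stirling.stirlingSeq n) + 1/2 * Real.log 2 = dSeq n := by
    filter_upwards [eventually_gt_atTop 0] with n hn
    have hn0 : (0:ℝ) < n := by exact_mod_cast hn
    rw [Stirling.log_stirlingSeq_formula]
    have e1 : Real.log (2*(n:ℝ)) = Real.log 2 + Real.log n := Real.log_mul (by norm_num) hn0.ne'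
    have e2 : Real.log ((n:ℝ) / Real.exp 1) = Real.log n - 1 := by
      rw [Real.log_div hn0.ne' (Real.exp_ne_zero 1), Real.log_exp]
    rw [e1, e2, dSeq]
    ring
  have hlim : Real.log (Real.sqrt π) + 1/2 * Real.log 2 = Real.log (Real.sqrt (2*π)) := by
    have e : Real.log (Real.sqrt 2) = Real.log 2 / 2 := Real.log_sqrt (by norm_num)
    rw [Real.sqrt_mul (by norm_num) π, Real.log_mul (by positivity) hs.ne', e]
    ring
  rw [← hlim]
  exact h2.congr' heq


lemma dSeq_bounds (m : ℕ) (hm : 0 < m) :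
    Real.log (Real.sqrt (2*π)) + 1/(12*(m:ℝ)+1) ≤ dSeq m ∧
    dSeq m ≤ Real.log (Real.sqrt (2*π)) + 1/(12*(m:ℝ)) := by
  set L := Real.log (Real.sqrt (2*π)) with hL
  have step : ∀ n : ℕ, 0 < n →
      dSeq n - 1/(12*(n:ℝ)) ≤ dSeq (n+1) - 1/(12*((n:ℝ)+1)) ∧
      dSeq (n+1) - 1/(12*((n:ℝ)+1)+1) ≤ dSeq n - 1/(12*(n:ℝ)+1) := by
    intro n hn
    have hx : (1:ℝ) ≤ (n:ℝ) := by exact_mod_cast hn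
    have hk := key_ineq hx
    have hstep := dSeq_step n hn
    exact ⟨by linarith [hk.2], by linarith [hk.1]⟩
  have chain_up : ∀ n, m ≤ n → dSeq m - 1/(12*(m:ℝ)) ≤ dSeq n - 1/(12*(n:ℝ)) := by
    intro n hn
    induction n with
    | zero => omega
    | succ k ih =>
      rcases Nat.lt_or_ge m (k+1) with h | h
      · have hk : m ≤ k := by omega
        have hs := (step k (by omega)).1
        have hc : ((k:ℝ)+1) = ((k+1 : ℕ) : ℝ) := by push_cast; ring
        rw [hc] at hs
        linarith [ih hk]
      · have : m = k+1 := by omega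
        subst this
        exact le_refl _
  have chain_down : ∀ n, m ≤ n → dSeq n - 1/(12*(n:ℝ)+1) ≤ dSeq m - 1/(12*(m:ℝ)+1) := by
    intro n hn
    induction n with
    | zero => omega
    | succ k ih =>
      rcases Nat.lt_or_ge m (k+1) with h | h
      · have hk : m ≤ k := by omega
        have hs := (step k (by omega)).2
        have hc : ((k:ℝ)+1) = ((k+1 : ℕ) : ℝ) := by push_cast; ring
        rw [hc] at hs
        linarith [ih hk]
      · have : m = k+1 := by omega
        subst this
        exact le_refl _
  have hden : ∀ c : ℝ, Tendsto (fun n : ℕ => 1/(12*(n:ℝ)+c)) atTop (𝓝 0) := by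
    intro c
    have h1 : Tendsto (fun n : ℕ => 12*(n:ℝ)+c) atTop atTop :=
      tendsto_atTop_add_const_right _ c
        (tendsto_natCast_atTop_atTop.const_mul_atTop (by norm_num))
    simpa [one_div, Pi.inv_def] using h1.inv_tendsto_atTop
  constructor
  · have hA : Tendsto (fun n : ℕ => dSeq n - 1/(12*(n:ℝ)+1)) atTop (𝓝 (L - 0)) :=
      dSeq_tendsto.sub (hden 1)
    have := le_of_tendsto hA (eventually_atTop.2 ⟨m, chain_down⟩)
    linarith
  · have hB : Tendsto (fun n : ℕ => dSeq n - 1/(12*(n:ℝ))) atTop (𝓝 (L - 0)) := by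
      have h0 := dSeq_tendsto.sub (hden 0)
      have he : (fun n : ℕ => dSeq n - 1/(12*(n:ℝ)+0)) = fun n : ℕ => dSeq n - 1/(12*(n:ℝ)) := by
        funext n; norm_num
      rw [he] at h0
      rw [hL]
      exact h0
    have := ge_of_tendsto hB (eventually_atTop.2 ⟨m, chain_up⟩)
    linarith

/-- Robbins's sharpened Stirling bounds: for every positive integer `m`,
`√(2π)·m^{m+1/2}·e^{1/(12m+1) − m} ≤ m! ≤ √(2π)·m^{m+1/2}·e^{1/(12m) − m}`. -/
theorem stirling_bounds (m : ℕ) (hm : 0 < m) :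
    Real.sqrt (2 * π) * (m : ℝ) ^ ((m : ℝ) + 1 / 2) *
        Real.exp (1 / (12 * (m : ℝ) + 1) - (m : ℝ)) ≤ (Nat.factorial m : ℝ) ∧
      (Nat.factorial m : ℝ) ≤
        Real.sqrt (2 * π) * (m : ℝ) ^ ((m : ℝ) + 1 / 2) *
          Real.exp (1 / (12 * (m : ℝ)) - (m : ℝ)) := by
  have hmR : (0:ℝ) < m := by exact_mod_cast hm
  obtain ⟨hlo, hup⟩ := dSeq_bounds m hm
  have hsq : (0:ℝ) < Real.sqrt (2*π) := Real.sqrt_pos.mpr (by positivity)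
  have hfact : (Nat.factorial m : ℝ) = Real.exp (dSeq m + ((m:ℝ)+1/2) * Real.log m - m) := by
    rw [show dSeq m + ((m:ℝ)+1/2) * Real.log m - m = Real.log (Nat.factorial m) by
        rw [dSeq]; ring,
      Real.exp_log (by positivity)]
  have hform : ∀ c : ℝ, Real.sqrt (2*π) * (m:ℝ) ^ ((m:ℝ) + 1/2) * Real.exp (c - m) =
      Real.exp (Real.log (Real.sqrt (2*π)) + ((m:ℝ)+1/2) * Real.log m + (c - m)) := by
    intro c
    rw [Real.rpow_def_of_pos hmR]
    nth_rewrite 1 [← Real.exp_log hsq]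
    rw [← Real.exp_add, ← Real.exp_add]
    ring_nf
  constructor
  · rw [hfact, hform]
    apply Real.exp_le_exp.mpr
    linarith
  · rw [hfact, hform]
    apply Real.exp_le_exp.mpr
    linarith
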